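/- For all integers m, q ∈ ℤ, the following are equivalent: (i) (0,m) ∼_{G(1,2)} (0,q); (ii) (m,0) ∼_H (q,0); (iii) there exists k ∈ ℤ with m = 2^k·q. -/

import Mathlib

/-- The ring of dyadic rationals `ℤ[1/2]`, as a subring of `ℚ`. -/
def DyadicRing : Subring ℚ := Subring.closure {(2:ℚ)⁻¹}

lemma DyadicRing.two_mem : (2:ℚ) ∈ DyadicRing := by
  convert add_mem (Subring.one_mem DyadicRing) (Subring.one_mem DyadicRing) using 1
  norm_num

lemma DyadicRing.half_mem : (2:ℚ)⁻¹ ∈ DyadicRing := Subring.subset_closure rfl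

/-- `2` as a unit of `ℤ[1/2]`. -/
def DyadicRing.two : DyadicRingˣ where
  val := ⟨2, DyadicRing.two_mem⟩
  inv := ⟨(2:ℚ)⁻¹, DyadicRing.half_mem⟩
  val_inv := by ext; norm_num
  inv_val := by ext; norm_num

/-- The powers `2^m` for `m : ℤ`, as elements of `ℤ[1/2]`. -/
def pow2 (m : ℤ) : DyadicRing := ((DyadicRing.two ^ m : DyadicRingˣ) : DyadicRing)

lemma pow2_add (m q : ℤ) : pow2 (m + q) = pow2 m * pow2 q := by
  simp [pow2, zpow_add]

lemma pow2_zero : pow2 0 = 1 := by simp [pow2]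

/-- The group `H = ℤ[1/2] ⋊ ℤ`, where `ℤ` acts by powers of `2`;
multiplication is `(r,m)·(s,q) = (r + 2^m·s, m+q)`. -/
@[ext] structure Hgrp where
  r : DyadicRing
  m : ℤ

instance : Mul Hgrp := ⟨fun x y => ⟨x.r + pow2 x.m * y.r, x.m + y.m⟩⟩
instance : One Hgrp := ⟨⟨0, 0⟩⟩
instance : Inv Hgrp := ⟨fun x => ⟨-(pow2 (-x.m) * x.r), -x.m⟩⟩

lemma Hgrp.mul_def (x y : Hgrp) : x * y = ⟨x.r + pow2 x.m * y.r, x.m + y.m⟩ := rfl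
lemma Hgrp.one_def : (1 : Hgrp) = ⟨0, 0⟩ := rfl
lemma Hgrp.inv_def (x : Hgrp) : x⁻¹ = ⟨-(pow2 (-x.m) * x.r), -x.m⟩ := rfl

instance : Group Hgrp where
  mul_assoc a b c := by
    simp only [Hgrp.mul_def, Hgrp.mk.injEq, pow2_add]
    constructor <;> ring
  one_mul a := by
    obtain ⟨r, m⟩ := a
    simp only [Hgrp.one_def, Hgrp.mul_def, Hgrp.mk.injEq, pow2_zero]
    constructor <;> ring
  mul_one a := by
    obtain ⟨r, m⟩ := a
    simp only [Hgrp.one_def, Hgrp.mul_def, Hgrp.mk.injEq, pow2_zero]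
    constructor <;> ring
  inv_mul_cancel a := by
    simp only [Hgrp.inv_def, Hgrp.mul_def, Hgrp.one_def, Hgrp.mk.injEq]
    constructor <;> ring

/-- Conjugacy in `H`. -/
def conjH (x y : Hgrp) : Prop := ∃ z : Hgrp, z * x * z⁻¹ = y

/-- The element `a = (1,0)` of `H`. -/
def aH : Hgrp := ⟨1, 0⟩
/-- The element `t = (0,1)` of `H`. -/
def tH : Hgrp := ⟨0, 1⟩
lemma aH_zpow (n : ℤ) : aH ^ n = Hgrp.mk (n : DyadicRing) 0 := by
  induction n using Int.induction_on with
  | zero => simp [Hgrp.one_def]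
  | succ k ih =>
      rw [zpow_add_one, ih]
      simp only [aH, Hgrp.mul_def, Hgrp.mk.injEq, pow2_zero]
      push_cast
      constructor <;> first | ring | simp | (push_cast; ring)
  | pred k ih =>
      rw [zpow_sub_one, ih]
      simp only [aH, Hgrp.inv_def, Hgrp.mul_def, Hgrp.mk.injEq, pow2_zero, neg_zero]
      push_cast
      constructor <;> first | ring | simp | (push_cast; ring)

lemma tH_zpow (n : ℤ) : tH ^ n = Hgrp.mk 0 n := by
  induction n using Int.induction_on with
  | zero => simp [Hgrp.one_def]
  | succ k ih =>
      rw [zpow_add_one, ih]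
      simp [tH, Hgrp.mul_def]
  | pred k ih =>
      rw [zpow_sub_one, ih]
      simp only [tH, Hgrp.inv_def, Hgrp.mul_def, Hgrp.mk.injEq]
      constructor <;> ring

lemma aH_zpow_injective : Function.Injective fun n : ℤ => aH ^ n := by
  intro x y h
  simp only [aH_zpow, Hgrp.mk.injEq] at h
  have : ((x : DyadicRing) : ℚ) = ((y : DyadicRing) : ℚ) := by rw [h.1]
  simpa using this

lemma tH_zpow_injective : Function.Injective fun n : ℤ => tH ^ n := by
  intro x y h
  simp only [tH_zpow, Hgrp.mk.injEq] at h
  exact h.2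

/-- The homomorphism `ℤ →* G` given by powers of `g`. -/
def zintHom {G : Type*} [Group G] (g : G) : Multiplicative ℤ →* G where
  toFun n := g ^ (Multiplicative.toAdd n)
  map_one' := by simp
  map_mul' x y := by simp [zpow_add]

/-- For `g` with `n ↦ g ^ n` injective, `⟨g⟩ ≅ ℤ`. -/
noncomputable def zpowMulEquiv {G : Type*} [Group G] (g : G)
    (hg : Function.Injective fun n : ℤ => g ^ n) :
    Multiplicative ℤ ≃* Subgroup.zpowers g := by
  refine MulEquiv.ofBijective
    ((zintHom g).codRestrict (Subgroup.zpowers g).toSubmonoid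
      (fun n => Subgroup.mem_zpowers_iff.mpr ⟨Multiplicative.toAdd n, rfl⟩)) ⟨?_, ?_⟩
  · intro x y h
    have : g ^ (Multiplicative.toAdd x) = g ^ (Multiplicative.toAdd y) :=
      congrArg Subtype.val h
    exact hg this
  · rintro ⟨x, hx⟩
    obtain ⟨n, hn⟩ := Subgroup.mem_zpowers_iff.mp hx
    exact ⟨Multiplicative.ofAdd n, Subtype.ext hn⟩

/-- The associated isomorphism `⟨a⟩ ≅ ⟨t⟩`, `a ↦ t`, of the HNN extension defining
the Baumslag group. -/
noncomputable def φBS : Subgroup.zpowers aH ≃* Subgroup.zpowers tH :=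
  (zpowMulEquiv aH aH_zpow_injective).symm.trans (zpowMulEquiv tH tH_zpow_injective)

/-- The Baumslag group `G(1,2)`, as HNN extension of `H = BS(1,2)` with stable letter `b`,
associated subgroups `⟨a⟩` and `⟨t⟩`, and associated isomorphism `a ↦ t`. -/
noncomputable abbrev BG := HNNExtension Hgrp (Subgroup.zpowers aH) (Subgroup.zpowers tH) φBS

/-- The embedding of `H` into the Baumslag group. -/
noncomputable def ι : Hgrp →* BG := HNNExtension.of

/-- The stable letter `b` of the Baumslag group. -/
noncomputable def bBG : BG := HNNExtension.t

/-- Conjugacy in the Baumslag group `G(1,2)`. -/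
def conjBG (x y : BG) : Prop := ∃ z : BG, z * x * z⁻¹ = y

section Aux

lemma pow2_mul_neg (n : ℤ) : pow2 n * pow2 (-n) = 1 := by
  rw [← pow2_add]; simp [pow2_zero]

lemma pow2_neg_mul (n : ℤ) : pow2 (-n) * pow2 n = 1 := by
  rw [mul_comm]; exact pow2_mul_neg n

lemma Hconj_t (z : Hgrp) (j : ℤ) :
    z * ⟨0, j⟩ * z⁻¹ = ⟨z.r - pow2 j * z.r, j⟩ := by
  obtain ⟨s, n⟩ := z
  have h1 : pow2 (n + j) * pow2 (-n) = pow2 j := by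
    rw [← pow2_add, show n + j + -n = j by omega]
  simp only [Hgrp.mul_def, Hgrp.inv_def, Hgrp.mk.injEq, add_zero]
  constructor
  · linear_combination (-s) * h1
  · omega

lemma Hconj_a (z : Hgrp) (c : DyadicRing) :
    z * ⟨c, 0⟩ * z⁻¹ = ⟨pow2 z.m * c, 0⟩ := by
  obtain ⟨s, n⟩ := z
  have h1 : pow2 n * pow2 (-n) = 1 := pow2_mul_neg n
  simp only [Hgrp.mul_def, Hgrp.inv_def, Hgrp.mk.injEq, add_zero]
  constructor
  · linear_combination (-s) * h1
  · omega

lemma mem_zpowers_aH_iff {x : Hgrp} :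
    x ∈ Subgroup.zpowers aH ↔ ∃ n : ℤ, x = ⟨(n : DyadicRing), 0⟩ := by
  rw [Subgroup.mem_zpowers_iff]
  constructor
  · rintro ⟨n, rfl⟩; exact ⟨n, by rw [aH_zpow]⟩
  · rintro ⟨n, rfl⟩; exact ⟨n, by rw [aH_zpow]⟩

lemma mem_zpowers_tH_iff {x : Hgrp} :
    x ∈ Subgroup.zpowers tH ↔ ∃ n : ℤ, x = ⟨0, n⟩ := by
  rw [Subgroup.mem_zpowers_iff]
  constructor
  · rintro ⟨n, rfl⟩; exact ⟨n, by rw [tH_zpow]⟩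
  · rintro ⟨n, rfl⟩; exact ⟨n, by rw [tH_zpow]⟩

lemma intCast_dyadic_eq_zero {j : ℤ} (h : (j : DyadicRing) = 0) : j = 0 := by
  have : ((j : DyadicRing) : ℚ) = ((0 : DyadicRing) : ℚ) := by rw [h]
  simpa using this

end Aux
section Aux2

lemma aH_mem (n : ℤ) : (Hgrp.mk (n : DyadicRing) 0) ∈ Subgroup.zpowers aH :=
  mem_zpowers_aH_iff.mpr ⟨n, rfl⟩

lemma tH_mem (n : ℤ) : (Hgrp.mk 0 n) ∈ Subgroup.zpowers tH :=
  mem_zpowers_tH_iff.mpr ⟨n, rfl⟩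

lemma φBS_apply (n : ℤ) (h : aH ^ n ∈ Subgroup.zpowers aH) :
    (φBS ⟨aH ^ n, h⟩ : Hgrp) = tH ^ n := by
  have h1 : zpowMulEquiv aH aH_zpow_injective (Multiplicative.ofAdd n) = ⟨aH ^ n, h⟩ :=
    Subtype.ext rfl
  have h2 : (zpowMulEquiv aH aH_zpow_injective).symm ⟨aH ^ n, h⟩ = Multiplicative.ofAdd n := by
    rw [← h1, MulEquiv.symm_apply_apply]
  show ((zpowMulEquiv tH tH_zpow_injective)
    ((zpowMulEquiv aH aH_zpow_injective).symm ⟨aH ^ n, h⟩) : Hgrp) = tH ^ n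
  rw [h2]
  rfl

lemma φBS_symm_apply (n : ℤ) (h : tH ^ n ∈ Subgroup.zpowers tH) :
    (φBS.symm ⟨tH ^ n, h⟩ : Hgrp) = aH ^ n := by
  have h1 : zpowMulEquiv tH tH_zpow_injective (Multiplicative.ofAdd n) = ⟨tH ^ n, h⟩ :=
    Subtype.ext rfl
  have h2 : (zpowMulEquiv tH tH_zpow_injective).symm ⟨tH ^ n, h⟩ = Multiplicative.ofAdd n := by
    rw [← h1, MulEquiv.symm_apply_apply]
  show ((zpowMulEquiv aH aH_zpow_injective)
    ((zpowMulEquiv tH tH_zpow_injective).symm ⟨tH ^ n, h⟩) : Hgrp) = aH ^ n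
  rw [h2]
  rfl

/-- `ι (0,j) * t = t * ι (j,0)` -/
lemma ι_t_comm (j : ℤ) :
    ι ⟨0, j⟩ * HNNExtension.t = HNNExtension.t * ι ⟨(j : DyadicRing), 0⟩ := by
  have hb : tH ^ j ∈ Subgroup.zpowers tH := by rw [tH_zpow]; exact tH_mem j
  have := HNNExtension.of_mul_t (φ := φBS) ⟨tH ^ j, hb⟩
  rw [φBS_symm_apply j hb] at this
  rw [show (Hgrp.mk 0 j) = tH ^ j from (tH_zpow j).symm,
    show (Hgrp.mk (j : DyadicRing) 0) = aH ^ j from (aH_zpow j).symm]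
  exact this

/-- `ι (j,0) * t⁻¹ = t⁻¹ * ι (0,j)` -/
lemma ι_tinv_comm (j : ℤ) :
    ι ⟨(j : DyadicRing), 0⟩ * (HNNExtension.t)⁻¹ = (HNNExtension.t)⁻¹ * ι ⟨0, j⟩ := by
  have ha : aH ^ j ∈ Subgroup.zpowers aH := by rw [aH_zpow]; exact aH_mem j
  have := HNNExtension.of_mul_inv_t (φ := φBS) ⟨aH ^ j, ha⟩
  rw [φBS_apply j ha] at this
  rw [show (Hgrp.mk 0 j) = tH ^ j from (tH_zpow j).symm,
    show (Hgrp.mk (j : DyadicRing) 0) = aH ^ j from (aH_zpow j).symm]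
  exact this

/-- `b * ι (n,0) * b⁻¹ = ι (0,n)` -/
lemma bconj (n : ℤ) : bBG * ι ⟨(n : DyadicRing), 0⟩ * bBG⁻¹ = ι ⟨0, n⟩ := by
  have ha : aH ^ n ∈ Subgroup.zpowers aH := by rw [aH_zpow]; exact aH_mem n
  have := HNNExtension.t_mul_of (φ := φBS) ⟨aH ^ n, ha⟩
  rw [φBS_apply n ha] at this
  rw [show (Hgrp.mk 0 n) = tH ^ n from (tH_zpow n).symm,
    show (Hgrp.mk (n : DyadicRing) 0) = aH ^ n from (aH_zpow n).symm]
  have this2 : HNNExtension.t * (HNNExtension.of (aH ^ n) : BG)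
      = HNNExtension.of (tH ^ n) * HNNExtension.t := this
  show HNNExtension.t * HNNExtension.of (aH ^ n) * (HNNExtension.t)⁻¹
    = HNNExtension.of (tH ^ n)
  rw [this2]
  group

end Aux2
section Words

open HNNExtension HNNExtension.NormalWord

/-- abbreviations for the associated subgroups -/
noncomputable abbrev AA : Subgroup Hgrp := Subgroup.zpowers aH
noncomputable abbrev BB : Subgroup Hgrp := Subgroup.zpowers tH

/-- Multiply the last letter of a word by `h`. -/
def mulLast (h : Hgrp) : List (ℤˣ × Hgrp) → List (ℤˣ × Hgrp)
  | [] => []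
  | [x] => [(x.1, x.2 * h)]
  | x :: y :: l => x :: mulLast h (y :: l)

lemma mulLast_cons_cons (h : Hgrp) (x y : ℤˣ × Hgrp) (l : List (ℤˣ × Hgrp)) :
    mulLast h (x :: y :: l) = x :: mulLast h (y :: l) := rfl

lemma mulLast_head_fst (h : Hgrp) (x : ℤˣ × Hgrp) (l : List (ℤˣ × Hgrp)) :
    (mulLast h (x :: l)).head?.map Prod.fst = some x.1 := by
  cases l <;> rfl

lemma chain_mulLast (h : Hgrp) :
    ∀ l : List (ℤˣ × Hgrp),
      l.IsChain (fun a b => a.2 ∈ toSubgroup AA BB a.1 → a.1 = b.1) →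
      (mulLast h l).IsChain (fun a b => a.2 ∈ toSubgroup AA BB a.1 → a.1 = b.1) := by
  intro l
  induction l with
  | nil => intro _; simp [mulLast]
  | cons x l ih =>
    cases l with
    | nil => intro _; simp [mulLast]
    | cons y l' =>
      intro hc
      rcases List.isChain_cons_cons.1 hc with ⟨hxy, hyl⟩
      have htail := ih hyl
      rw [mulLast_cons_cons]
      cases l' with
      | nil => exact List.isChain_cons_cons.2 ⟨hxy, List.isChain_singleton _⟩
      | cons z l'' => exact List.isChain_cons_cons.2 ⟨hxy, htail⟩

lemma prod_mulLast (h : Hgrp) :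
    ∀ (x : ℤˣ × Hgrp) (l : List (ℤˣ × Hgrp)),
      ((mulLast h (x :: l)).map
          (fun p => (HNNExtension.t ^ (p.1 : ℤ) * HNNExtension.of p.2 : BG))).prod
        = (((x :: l)).map
          (fun p => (HNNExtension.t ^ (p.1 : ℤ) * HNNExtension.of p.2 : BG))).prod
          * HNNExtension.of h := by
  intro x l
  induction l generalizing x with
  | nil => simp [mulLast, map_mul, mul_assoc]
  | cons y l' ih =>
    rw [mulLast_cons_cons]
    simp only [List.map_cons, List.prod_cons] at *
    rw [ih y]
    simp only [mul_assoc]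

lemma exists_reducedWord (z : BG) :
    ∃ w : ReducedWord Hgrp AA BB, w.prod φBS = z := by
  obtain ⟨d⟩ := NormalWord.TransversalPair.nonempty Hgrp AA BB
  refine ⟨(z • (NormalWord.empty : NormalWord d)).toReducedWord, ?_⟩
  have := NormalWord.prod_smul φBS z (NormalWord.empty : NormalWord d)
  rw [NormalWord.prod_empty, mul_one] at this
  exact this

end Words
section KeyLemma

open HNNExtension HNNExtension.NormalWord

lemma prod_nil_eq (head : Hgrp) (chain) :
    (ReducedWord.mk head ([] : List (ℤˣ × Hgrp)) chain).prod φBS = ι head := by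
  simp only [ReducedWord.prod, List.map_nil, List.prod_nil, mul_one]
  rfl

lemma prod_cons_eq (head : Hgrp) (x : ℤˣ × Hgrp) (l : List (ℤˣ × Hgrp)) (chain) (chainTail) :
    (ReducedWord.mk head (x :: l) chain).prod φBS
      = ι head * (HNNExtension.t ^ ((x.1 : ℤˣ) : ℤ)
        * (ReducedWord.mk x.2 l chainTail).prod φBS) := by
  simp only [ReducedWord.prod, List.map_cons, List.prod_cons, mul_assoc]
  rfl

lemma prod_mulLast' (head h : Hgrp) (x : ℤˣ × Hgrp) (l : List (ℤˣ × Hgrp)) (ch1) (ch2) :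
    (ReducedWord.mk head (mulLast h (x :: l)) ch1).prod φBS
      = (ReducedWord.mk head (x :: l) ch2).prod φBS * ι h := by
  simp only [ReducedWord.prod]
  rw [prod_mulLast, ← mul_assoc]
  rfl

lemma key (l : List (ℤˣ × Hgrp)) :
    ∀ (head : Hgrp)
      (chain : l.IsChain (fun a b => a.2 ∈ toSubgroup AA BB a.1 → a.1 = b.1))
      (y : Hgrp) (c : DyadicRing), c ≠ 0 →
      ((∃ j : ℤ, y = ⟨0, j⟩ ∧ (j : DyadicRing) = c) ∨ y = ⟨c, 0⟩) →
      ∀ m : ℤ,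
      (ReducedWord.mk head l chain).prod φBS * ι ⟨0, m⟩
        = ι y * (ReducedWord.mk head l chain).prod φBS →
      ∃ k : ℤ, (m : DyadicRing) = pow2 k * c := by
  induction l with
  | nil =>
    intro head chain y c hc hy m heq
    rw [prod_nil_eq, ← map_mul, ← map_mul] at heq
    have h : head * ⟨0, m⟩ = y * head := HNNExtension.of_injective φBS heq
    obtain ⟨s, n⟩ := head
    rcases hy with ⟨j, rfl, hj⟩ | rfl
    · simp only [Hgrp.mul_def, Hgrp.mk.injEq, pow2_zero] at h
      have hm : m = j := by omega
      exact ⟨0, by rw [pow2_zero, one_mul, ← hj, hm]⟩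
    · simp only [Hgrp.mul_def, Hgrp.mk.injEq, pow2_zero] at h
      exact absurd (by linear_combination -h.1 : c = 0) hc
  | cons x l ih =>
    intro head chain y c hc hy m heq
    have chainTail := (List.isChain_cons.1 chain).2
    -- the two reduced words with equal products
    have hch1 := chain_mulLast ⟨0, m⟩ (x :: l) chain
    have hprod : (ReducedWord.mk head (mulLast ⟨0, m⟩ (x :: l)) hch1).prod φBS
        = (ReducedWord.mk (y * head) (x :: l) chain).prod φBS := by
      rw [prod_mulLast' head ⟨0, m⟩ x l hch1 chain, heq]
      simp only [ReducedWord.prod, map_mul, mul_assoc]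
      rfl
    have hjunction : head⁻¹ * (y * head) ∈ toSubgroup AA BB (-x.1) := by
      refine (ReducedWord.map_fst_eq_and_of_prod_eq φBS hprod).2 x.1 ?_
      show x.1 ∈ (mulLast (⟨0, m⟩ : Hgrp) (x :: l)).head?.map Prod.fst
      rw [mulLast_head_fst]
      rfl
    have hE : head⁻¹ * y * head ∈ toSubgroup AA BB (-x.1) := by rwa [mul_assoc]
    -- set up abbreviation for the tail word
    set W := (ReducedWord.mk x.2 l chainTail).prod φBS with hW
    rw [prod_cons_eq head x l chain chainTail, ← hW] at heq
    rcases hy with ⟨j, rfl, hj⟩ | rfl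
    · -- y = t^j
      have hjne : j ≠ 0 := fun h0 => hc (by rw [← hj, h0, Int.cast_zero])
      have hEval : head⁻¹ * ⟨0, j⟩ * head = ⟨head⁻¹.r - pow2 j * head⁻¹.r, j⟩ := by
        have := Hconj_t head⁻¹ j
        rwa [inv_inv] at this
      rcases Int.units_eq_one_or x.1 with hx1 | hx1
      · -- x.1 = 1 : junction is in BB
        rw [hx1] at hE heq
        simp only [Units.val_one, zpow_one] at heq
        have hmemB : head⁻¹ * ⟨0, j⟩ * head ∈ BB := by
          simpa using hE
        obtain ⟨n', hn'⟩ := mem_zpowers_tH_iff.1 hmemB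
        have hjn' : j = n' := by
          rw [hEval] at hn'
          exact congrArg Hgrp.m hn'
        have hfix : head⁻¹ * ⟨0, j⟩ * head = ⟨0, j⟩ := by
          rw [hn', ← hjn']
        have hcomm1 : ι ⟨0, j⟩ * ι head = ι head * ι ⟨0, j⟩ := by
          rw [← map_mul, ← map_mul]
          congr 1
          calc (⟨0, j⟩ : Hgrp) * head = head * (head⁻¹ * ⟨0, j⟩ * head) := by group
            _ = head * ⟨0, j⟩ := by rw [hfix]
        have hcomm2 : ι ⟨0, j⟩ * HNNExtension.t = HNNExtension.t * ι ⟨(j : DyadicRing), 0⟩ :=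
          ι_t_comm j
        have h2 : ι head * (HNNExtension.t * (W * ι ⟨0, m⟩))
            = ι head * (HNNExtension.t * (ι ⟨(j : DyadicRing), 0⟩ * W)) := by
          calc ι head * (HNNExtension.t * (W * ι ⟨0, m⟩))
              = ι head * (HNNExtension.t * W) * ι ⟨0, m⟩ := by group
            _ = ι ⟨0, j⟩ * (ι head * (HNNExtension.t * W)) := heq
            _ = (ι ⟨0, j⟩ * ι head) * (HNNExtension.t * W) := by group
            _ = (ι head * ι ⟨0, j⟩) * (HNNExtension.t * W) := by rw [hcomm1]
            _ = ι head * ((ι ⟨0, j⟩ * HNNExtension.t) * W) := by group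
            _ = ι head * ((HNNExtension.t * ι ⟨(j : DyadicRing), 0⟩) * W) := by rw [hcomm2]
            _ = ι head * (HNNExtension.t * (ι ⟨(j : DyadicRing), 0⟩ * W)) := by group
        have hstep : W * ι ⟨0, m⟩ = ι ⟨(j : DyadicRing), 0⟩ * W :=
          mul_left_cancel (mul_left_cancel h2)
        exact ih x.2 chainTail ⟨(j : DyadicRing), 0⟩ c hc (Or.inr (by rw [hj])) m hstep
      · -- x.1 = -1 : junction would be in AA, contradiction
        rw [hx1] at hE
        have hmemA : head⁻¹ * ⟨0, j⟩ * head ∈ AA := by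
          simpa using hE
        obtain ⟨n', hn'⟩ := mem_zpowers_aH_iff.1 hmemA
        rw [hEval] at hn'
        exact absurd (congrArg Hgrp.m hn') hjne
    · -- y = (c, 0)
      have hEval : head⁻¹ * ⟨c, 0⟩ * head = ⟨pow2 (-head.m) * c, 0⟩ := by
        have := Hconj_a head⁻¹ c
        rw [inv_inv] at this
        rw [this]
        rfl
      rcases Int.units_eq_one_or x.1 with hx1 | hx1
      · -- x.1 = 1 : junction would be in BB, contradiction
        rw [hx1] at hE
        have hmemB : head⁻¹ * ⟨c, 0⟩ * head ∈ BB := by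
          simpa using hE
        obtain ⟨n', hn'⟩ := mem_zpowers_tH_iff.1 hmemB
        rw [hEval] at hn'
        have h0 : pow2 (-head.m) * c = 0 := congrArg Hgrp.r hn'
        refine absurd ?_ hc
        calc c = (pow2 head.m * pow2 (-head.m)) * c := by rw [pow2_mul_neg, one_mul]
          _ = pow2 head.m * (pow2 (-head.m) * c) := mul_assoc _ _ _
          _ = 0 := by rw [h0, mul_zero]
      · -- x.1 = -1 : junction in AA
        rw [hx1] at hE heq
        simp only [Units.val_neg, Units.val_one, zpow_neg, zpow_one] at heq
        have hmemA : head⁻¹ * ⟨c, 0⟩ * head ∈ AA := by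
          simpa using hE
        obtain ⟨j', hj'⟩ := mem_zpowers_aH_iff.1 hmemA
        rw [hEval] at hj'
        have hr : pow2 (-head.m) * c = (j' : DyadicRing) := congrArg Hgrp.r hj'
        have hc' : (j' : DyadicRing) ≠ 0 := by
          intro h0
          refine hc ?_
          calc c = (pow2 head.m * pow2 (-head.m)) * c := by rw [pow2_mul_neg, one_mul]
            _ = pow2 head.m * (pow2 (-head.m) * c) := mul_assoc _ _ _
            _ = 0 := by rw [hr, h0, mul_zero]
        have hfix : head⁻¹ * ⟨c, 0⟩ * head = ⟨(j' : DyadicRing), 0⟩ := by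
          rw [hEval, hr]
        have hcomm1 : ι ⟨c, 0⟩ * ι head = ι head * ι ⟨(j' : DyadicRing), 0⟩ := by
          rw [← map_mul, ← map_mul]
          congr 1
          calc (⟨c, 0⟩ : Hgrp) * head = head * (head⁻¹ * ⟨c, 0⟩ * head) := by group
            _ = head * ⟨(j' : DyadicRing), 0⟩ := by rw [hfix]
        have hcomm2 : ι ⟨(j' : DyadicRing), 0⟩ * (HNNExtension.t)⁻¹
            = (HNNExtension.t)⁻¹ * ι ⟨0, j'⟩ := ι_tinv_comm j'
        have h2 : ι head * ((HNNExtension.t)⁻¹ * (W * ι ⟨0, m⟩))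
            = ι head * ((HNNExtension.t)⁻¹ * (ι ⟨0, j'⟩ * W)) := by
          calc ι head * ((HNNExtension.t)⁻¹ * (W * ι ⟨0, m⟩))
              = ι head * ((HNNExtension.t)⁻¹ * W) * ι ⟨0, m⟩ := by group
            _ = ι ⟨c, 0⟩ * (ι head * ((HNNExtension.t)⁻¹ * W)) := heq
            _ = (ι ⟨c, 0⟩ * ι head) * ((HNNExtension.t)⁻¹ * W) := by group
            _ = (ι head * ι ⟨(j' : DyadicRing), 0⟩) * ((HNNExtension.t)⁻¹ * W) := by rw [hcomm1]
            _ = ι head * ((ι ⟨(j' : DyadicRing), 0⟩ * (HNNExtension.t)⁻¹) * W) := by group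
            _ = ι head * (((HNNExtension.t)⁻¹ * ι ⟨0, j'⟩) * W) := by rw [hcomm2]
            _ = ι head * ((HNNExtension.t)⁻¹ * (ι ⟨0, j'⟩ * W)) := by group
        have hstep : W * ι ⟨0, m⟩ = ι ⟨0, j'⟩ * W :=
          mul_left_cancel (mul_left_cancel h2)
        obtain ⟨k, hk⟩ := ih x.2 chainTail ⟨0, j'⟩ (j' : DyadicRing) hc'
          (Or.inl ⟨j', rfl, rfl⟩) m hstep
        refine ⟨k + (-head.m), ?_⟩
        rw [hk, ← hr, pow2_add, mul_assoc]

end KeyLemma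
section Final

open HNNExtension HNNExtension.NormalWord

lemma part2 (m q : ℤ) :
    conjH ⟨(m : DyadicRing), 0⟩ ⟨(q : DyadicRing), 0⟩ ↔
      ∃ k : ℤ, (m : DyadicRing) = pow2 k * (q : DyadicRing) := by
  constructor
  · rintro ⟨z, hz⟩
    rw [Hconj_a] at hz
    have h1 : pow2 z.m * (m : DyadicRing) = (q : DyadicRing) := congrArg Hgrp.r hz
    refine ⟨-z.m, ?_⟩
    calc (m : DyadicRing) = (pow2 (-z.m) * pow2 z.m) * (m : DyadicRing) := by
          rw [pow2_neg_mul, one_mul]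
      _ = pow2 (-z.m) * (pow2 z.m * (m : DyadicRing)) := mul_assoc _ _ _
      _ = pow2 (-z.m) * (q : DyadicRing) := by rw [h1]
  · rintro ⟨k, hk⟩
    refine ⟨⟨0, -k⟩, ?_⟩
    rw [Hconj_a]
    refine Hgrp.ext ?_ rfl
    show pow2 (-k) * (m : DyadicRing) = (q : DyadicRing)
    calc pow2 (-k) * (m : DyadicRing) = pow2 (-k) * (pow2 k * (q : DyadicRing)) := by rw [hk]
      _ = (pow2 (-k) * pow2 k) * (q : DyadicRing) := (mul_assoc _ _ _).symm
      _ = (q : DyadicRing) := by rw [pow2_neg_mul, one_mul]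

lemma BG_to_pow (m q : ℤ) (h : conjBG (ι ⟨0, m⟩) (ι ⟨0, q⟩)) :
    ∃ k : ℤ, (m : DyadicRing) = pow2 k * (q : DyadicRing) := by
  obtain ⟨z, hz⟩ := h
  by_cases hq : q = 0
  · subst hq
    have h1 : (⟨0, (0 : ℤ)⟩ : Hgrp) = 1 := Hgrp.one_def.symm
    rw [h1, map_one] at hz
    have h2 : ι ⟨0, m⟩ = 1 := by
      calc ι ⟨0, m⟩ = z⁻¹ * (z * ι ⟨0, m⟩ * z⁻¹) * z := by group
        _ = 1 := by rw [hz]; group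
    have h3 : (⟨0, m⟩ : Hgrp) = 1 :=
      HNNExtension.of_injective φBS (show ι ⟨0, m⟩ = ι (1 : Hgrp) by rw [map_one, h2])
    have h4 : m = 0 := by
      have := congrArg Hgrp.m (h3.trans Hgrp.one_def)
      simpa using this
    exact ⟨0, by rw [h4, pow2_zero, one_mul, Int.cast_zero]⟩
  · have hqc : (q : DyadicRing) ≠ 0 := fun h0 => hq (intCast_dyadic_eq_zero h0)
    obtain ⟨w, hw⟩ := exists_reducedWord z
    obtain ⟨head, l, chain⟩ := w
    have heq : (ReducedWord.mk head l chain).prod φBS * ι ⟨0, m⟩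
        = ι ⟨0, q⟩ * (ReducedWord.mk head l chain).prod φBS := by
      rw [hw, ← hz]; group
    exact key l head chain ⟨0, q⟩ (q : DyadicRing) hqc (Or.inl ⟨q, rfl, rfl⟩) m heq

lemma pow_to_BG (m q : ℤ) (h : conjH ⟨(m : DyadicRing), 0⟩ ⟨(q : DyadicRing), 0⟩) :
    conjBG (ι ⟨0, m⟩) (ι ⟨0, q⟩) := by
  obtain ⟨z, hz⟩ := h
  refine ⟨bBG * ι z * bBG⁻¹, ?_⟩
  have key2 : ι z * ι ⟨(m : DyadicRing), 0⟩ * (ι z)⁻¹ = ι ⟨(q : DyadicRing), 0⟩ := by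
    rw [← map_inv, ← map_mul, ← map_mul, hz]
  calc (bBG * ι z * bBG⁻¹) * ι ⟨0, m⟩ * (bBG * ι z * bBG⁻¹)⁻¹
      = (bBG * ι z * bBG⁻¹) * (bBG * ι ⟨(m : DyadicRing), 0⟩ * bBG⁻¹)
        * (bBG * ι z * bBG⁻¹)⁻¹ := by rw [bconj m]
    _ = bBG * (ι z * ι ⟨(m : DyadicRing), 0⟩ * (ι z)⁻¹) * bBG⁻¹ := by group
    _ = bBG * ι ⟨(q : DyadicRing), 0⟩ * bBG⁻¹ := by rw [key2]
    _ = ι ⟨0, q⟩ := bconj q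

end Final

theorem stmt5 (m q : ℤ) :
    (conjBG (ι ⟨0, m⟩) (ι ⟨0, q⟩) ↔ conjH ⟨(m : DyadicRing), 0⟩ ⟨(q : DyadicRing), 0⟩) ∧
    (conjH ⟨(m : DyadicRing), 0⟩ ⟨(q : DyadicRing), 0⟩ ↔
      ∃ k : ℤ, (m : DyadicRing) = pow2 k * (q : DyadicRing)) := by
  refine ⟨⟨fun h => (part2 m q).mpr (BG_to_pow m q h), pow_to_BG m q⟩, part2 m q⟩
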